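/- Let A be an orthogonal array OA(r, N, d, k) such that some N − s of its columns form a subarray with minimum Hamming distance MD ≥ k+1, and for each w = 1,…,t let B_w be a mixed orthogonal array of strength k with d rows and m_w columns of alphabet sizes d_{1w},…,d_{m_w w}, satisfying MD(B_w) ≥ 1. Then for all nonnegative integers u₁,…,u_t with 1 ≤ u₁+⋯+u_t ≤ N − s, all nonnegative integers n₁,…,n_t with 1 ≤ n₁+⋯+n_t ≤ s, and all nonnegative integers v_{iw} with v_{iw} ≤ n_w (1 ≤ w ≤ t, 1 ≤ i ≤ m_w), there exists an irredundant mixed orthogonal array IrMOA(r, N − s + Σ_{j=1}^{t}[(m_j − 1)u_j + Σ_{i=1}^{m_j} v_{ij}], d^{N−s−(u₁+⋯+u_t)}d_{11}^{u₁+v_{11}}⋯d_{m₁1}^{u₁+v_{m₁1}}⋯d_{1t}^{u_t+v_{1t}}⋯d_{m_t t}^{u_t+v_{m_t t}}, k). -/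

import Mathlib

open Finset

/-- The Hamming distance between two rows of an array: the number of columns
in which the rows differ. -/
def hamDist {ι κ : Type*} [Fintype κ] (A : ι → κ → ℕ) (i i' : ι) : ℕ :=
  (Finset.univ.filter fun j => A i j ≠ A i' j).card

/-- `MD(A)`: the minimum Hamming distance over all pairs of distinct rows. -/
noncomputable def minDist {ι κ : Type*} [Fintype κ] (A : ι → κ → ℕ) : ℕ :=
  sInf {n | ∃ i i', i ≠ i' ∧ hamDist A i i' = n}

/-- `A` is a mixed orthogonal array of strength `k` (rows indexed by `ι`,
columns by `κ`, column `j` taking values in `{0, …, lv j − 1}`): in the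
subarray given by any choice of at most `k` columns, every tuple of symbols
occurs equally often as a row, namely (number of rows)/(product of the levels
of the chosen columns) times. -/
def IsMOA {ι κ : Type*} [Fintype ι] [Fintype κ] [DecidableEq κ]
    (A : ι → κ → ℕ) (lv : κ → ℕ) (k : ℕ) : Prop :=
  (∀ i j, A i j < lv j) ∧
  ∀ S : Finset κ, S.card ≤ k → ∀ x : κ → ℕ, (∀ j ∈ S, x j < lv j) →
    (Finset.univ.filter fun i : ι => ∀ j ∈ S, A i j = x j).card * ∏ j ∈ S, lv j
      = Fintype.card ι

/-- An irredundant mixed orthogonal array of strength `k`: an MOA of strength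
`k` any two distinct rows of which have Hamming distance at least `k+1`. -/
def IsIrMOA {ι κ : Type*} [Fintype ι] [Fintype κ] [DecidableEq κ]
    (A : ι → κ → ℕ) (lv : κ → ℕ) (k : ℕ) : Prop :=
  IsMOA A lv k ∧ ∀ i i' : ι, i ≠ i' → k + 1 ≤ hamDist A i i'

/-- A difference scheme `D(r, c, d)`: an `r × c` matrix over `ℤ_d` such that
for any two distinct columns the `r` differences of corresponding entries
take each value of `ℤ_d` exactly `r/d` times. -/
def IsDiffScheme {r c d : ℕ} (B : Fin r → Fin c → ZMod d) : Prop :=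
  ∀ j j' : Fin c, j ≠ j' → ∀ g : ZMod d,
    (Finset.univ.filter fun i : Fin r => B i j - B i j' = g).card * d = r

lemma countA_aux {r N d k : ℕ} (A : Fin r → Fin N → ℕ)
    (hA : IsMOA A (fun _ => d) k)
    (T' : Finset (Fin N)) (hT' : T'.card ≤ k)
    (G : Fin N → Finset ℕ) (hG : ∀ j ∈ T', G j ⊆ Finset.range d) :
    (Finset.univ.filter fun i : Fin r => ∀ j ∈ T', A i j ∈ G j).card * d ^ T'.card
      = r * ∏ j ∈ T', (G j).card := by
  classical
  set F := Finset.univ.filter fun i : Fin r => ∀ j ∈ T', A i j ∈ G j with hF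
  have hmaps : ∀ i ∈ F, (fun j (_ : j ∈ T') => A i j) ∈ T'.pi G := by
    intro i hi
    rw [Finset.mem_pi]
    intro j hj
    exact (Finset.mem_filter.mp hi).2 j hj
  have hcard := Finset.card_eq_sum_card_fiberwise hmaps
  have hfiber : ∀ y ∈ T'.pi G,
      (F.filter fun i => (fun j (_ : j ∈ T') => A i j) = y).card * d ^ T'.card = r := by
    intro y hy
    have hyG : ∀ j (h : j ∈ T'), y j h ∈ G j := Finset.mem_pi.mp hy
    have hfe : (F.filter fun i => (fun j (_ : j ∈ T') => A i j) = y)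
        = Finset.univ.filter fun i : Fin r =>
            ∀ j ∈ T', A i j = (fun j => if h : j ∈ T' then y j h else 0) j := by
      ext i
      simp only [hF, Finset.mem_filter, Finset.mem_univ, true_and]
      constructor
      · rintro ⟨h1, h2⟩ j hj
        show A i j = if h : j ∈ T' then y j h else 0
        rw [dif_pos hj]
        exact congrFun (congrFun h2 j) hj
      · intro h
        have h' : ∀ j (hj : j ∈ T'), A i j = y j hj := by
          intro j hj
          have h2 := h j hj
          simp only [dif_pos hj] at h2
          exact h2
        refine ⟨fun j hj => ?_, ?_⟩
        · rw [h' j hj]; exact hyG j hj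
        · funext j hj; exact h' j hj
    rw [hfe]
    have hmoa := hA.2 T' hT' (fun j => if h : j ∈ T' then y j h else 0) (by
      intro j hj
      show (if h : j ∈ T' then y j h else 0) < d
      rw [dif_pos hj]
      exact Finset.mem_range.mp (hG j hj (hyG j hj)))
    rw [Finset.prod_const] at hmoa
    rw [Fintype.card_fin] at hmoa
    convert hmoa using 3
    congr!
  calc F.card * d ^ T'.card
      = (∑ y ∈ T'.pi G, (F.filter fun i => (fun j (_ : j ∈ T') => A i j) = y).card) * d ^ T'.card := by
        rw [← hcard]
    _ = ∑ y ∈ T'.pi G, (F.filter fun i => (fun j (_ : j ∈ T') => A i j) = y).card * d ^ T'.card :=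
        Finset.sum_mul _ _ _
    _ = ∑ _y ∈ T'.pi G, r := Finset.sum_congr rfl hfiber
    _ = (T'.pi G).card * r := by rw [Finset.sum_const, smul_eq_mul]
    _ = r * ∏ j ∈ T', (G j).card := by rw [Finset.card_pi, mul_comm]

lemma derived_MOA {r N d k : ℕ} {κ : Type*} [Fintype κ] [DecidableEq κ]
    (A : Fin r → Fin N → ℕ) (hA : IsMOA A (fun _ => d) k) (hd : 0 < d)
    (col : κ → Fin N) (enc : κ → ℕ → ℕ) (lv : κ → ℕ)
    (h1 : ∀ c a, a < d → enc c a < lv c)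
    (h2 : ∀ (j : Fin N) (P : Finset κ), (∀ c ∈ P, col c = j) → P.card ≤ k →
      ∀ x : κ → ℕ, (∀ c ∈ P, x c < lv c) →
      ((Finset.range d).filter fun a => ∀ c ∈ P, enc c a = x c).card * ∏ c ∈ P, lv c = d) :
    IsMOA (fun i c => enc c (A i (col c))) lv k := by
  classical
  constructor
  · exact fun i c => h1 c _ (hA.1 i (col c))
  intro T hT x hx
  set T' := T.image col with hT'def
  set G : Fin N → Finset ℕ := fun j =>
    (Finset.range d).filter fun a => ∀ c ∈ T.filter (fun c => col c = j), enc c a = x c with hGdef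
  have hG : ∀ j ∈ T', (G j).card * ∏ c ∈ T.filter (fun c => col c = j), lv c = d := by
    intro j _
    exact h2 j _ (fun c hc => (Finset.mem_filter.mp hc).2)
      (le_trans (Finset.card_filter_le _ _) hT) x (fun c hc => hx c (Finset.mem_filter.mp hc).1)
  have hfil : (Finset.univ.filter fun i : Fin r => ∀ c ∈ T, enc c (A i (col c)) = x c)
      = Finset.univ.filter fun i : Fin r => ∀ j ∈ T', A i j ∈ G j := by
    ext i
    simp only [Finset.mem_filter, Finset.mem_univ, true_and, hGdef, Finset.mem_range]
    constructor
    · intro h j hj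
      refine ⟨hA.1 i j, ?_⟩
      intro c hc
      obtain ⟨hcT, hcol⟩ := hc
      rw [← hcol]
      exact h c hcT
    · intro h c hc
      have hj : col c ∈ T' := Finset.mem_image_of_mem col hc
      exact (h (col c) hj).2 c ⟨hc, rfl⟩
  have key := countA_aux A hA T' (le_trans Finset.card_image_le hT) G
    (fun j _ => Finset.filter_subset _ _)
  have hprod : ∏ c ∈ T, lv c = ∏ j ∈ T', ∏ c ∈ T.filter (fun c => col c = j), lv c :=
    (Finset.prod_fiberwise_of_maps_to (fun c hc => Finset.mem_image_of_mem col hc) lv).symm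
  have hmain : ((Finset.univ.filter fun i : Fin r => ∀ c ∈ T, enc c (A i (col c)) = x c).card
      * ∏ c ∈ T, lv c) * d ^ T'.card = r * d ^ T'.card := by
    rw [hfil, hprod]
    calc (Finset.univ.filter fun i : Fin r => ∀ j ∈ T', A i j ∈ G j).card
        * (∏ j ∈ T', ∏ c ∈ T.filter (fun c => col c = j), lv c) * d ^ T'.card
        = ((Finset.univ.filter fun i : Fin r => ∀ j ∈ T', A i j ∈ G j).card * d ^ T'.card)
          * ∏ j ∈ T', ∏ c ∈ T.filter (fun c => col c = j), lv c := by ring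
      _ = (r * ∏ j ∈ T', (G j).card) * ∏ j ∈ T', ∏ c ∈ T.filter (fun c => col c = j), lv c := by
          rw [key]
      _ = r * ∏ j ∈ T', ((G j).card * ∏ c ∈ T.filter (fun c => col c = j), lv c) := by
          rw [mul_assoc, ← Finset.prod_mul_distrib]
      _ = r * ∏ _j ∈ T', d := by rw [Finset.prod_congr rfl hG]
      _ = r * d ^ T'.card := by rw [Finset.prod_const]
  have hfin := Nat.eq_of_mul_eq_mul_right (pow_pos hd T'.card) hmain
  rw [Fintype.card_fin]
  convert hfin using 3

set_option maxHeartbeats 2000000 in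
/-- Let `A = OA(r, N, d, k)` such that some `N − s` of its
columns (a set `S`) form a subarray with minimum Hamming distance `≥ k+1`, and
for `w = 1,…,t` let `B w` be an MOA of strength `k` with `d` rows, `m w`
columns and levels `Blv w`, with `MD(B w) ≥ 1`. Then for all `u₁,…,u_t ≥ 0`
with `1 ≤ u₁+⋯+u_t ≤ N − s`, all `n₁,…,n_t ≥ 0` with `1 ≤ n₁+⋯+n_t ≤ s`, and
all `v_{iw} ≤ n_w`, there is an irredundant MOA of strength `k` with `r` rows,
`N − s − (u₁+⋯+u_t)` columns of `d` levels and, for each `w, i`, exactly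
`u w + v w i` columns of `Blv w i` levels. -/
theorem statement14 {r N d k s t : ℕ} (hs : s ≤ N)
    (A : Fin r → Fin N → ℕ) (hA : IsMOA A (fun _ => d) k)
    (S : Finset (Fin N)) (hScard : S.card = N - s)
    (hSMD : k + 1 ≤ minDist (fun i (j : S) => A i j.1))
    (m : Fin t → ℕ)
    (B : (w : Fin t) → ℕ → Fin (m w) → ℕ)
    (Blv : (w : Fin t) → Fin (m w) → ℕ)
    (hB : ∀ w, IsMOA (fun a : Fin d => B w a.val) (Blv w) k)
    (hBMD : ∀ w, 1 ≤ minDist (fun a : Fin d => B w a.val))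
    (u : Fin t → ℕ) (hu1 : 1 ≤ ∑ w, u w) (huN : ∑ w, u w ≤ N - s)
    (n : Fin t → ℕ) (hn1 : 1 ≤ ∑ w, n w) (hns : ∑ w, n w ≤ s)
    (v : (w : Fin t) → Fin (m w) → ℕ) (hv : ∀ w i, v w i ≤ n w) :
    ∃ C : Fin r →
        (Fin (N - s - ∑ w, u w) ⊕ (Σ w : Fin t, Σ i : Fin (m w), Fin (u w + v w i))) → ℕ,
      IsIrMOA C (Sum.elim (fun _ => d) fun p => Blv p.1 p.2.1) k := by
  classical
  -- basic positivity facts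
  have ht : 0 < t := by
    rcases Nat.eq_zero_or_pos t with rfl | h
    · simp at hu1
    · exact h
  have hd2 : 2 ≤ d := by
    by_contra hcon
    push_neg at hcon
    have hempty : {nn | ∃ a a' : Fin d, a ≠ a' ∧
        hamDist (fun x : Fin d => B ⟨0, ht⟩ x.val) a a' = nn} = ∅ := by
      ext nn
      simp only [Set.mem_setOf_eq, Set.mem_empty_iff_false, iff_false, not_exists]
      rintro a a' ⟨hne, -⟩
      have h1 := a.isLt
      have h2 := a'.isLt
      exact hne (Fin.ext (by omega))
    have h1 := hBMD ⟨0, ht⟩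
    rw [minDist, hempty, Nat.sInf_empty] at h1
    omega
  have hd : 0 < d := by omega
  have hBdiff : ∀ (w : Fin t) (a a' : ℕ), a < d → a' < d → a ≠ a' →
      ∃ i : Fin (m w), B w a i ≠ B w a' i := by
    intro w a a' ha ha' hne
    by_contra hcon
    push_neg at hcon
    have h0 : hamDist (fun x : Fin d => B w x.val) ⟨a, ha⟩ ⟨a', ha'⟩ = 0 := by
      rw [hamDist, Finset.card_eq_zero, Finset.filter_eq_empty_iff]
      intro i _
      simp only [ne_eq, not_not]
      exact hcon i
    have hle : minDist (fun x : Fin d => B w x.val) ≤ 0 :=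
      Nat.sInf_le ⟨⟨a, ha⟩, ⟨a', ha'⟩, Fin.ne_of_val_ne hne, h0⟩
    have := hBMD w
    omega
  have hm1 : ∀ w : Fin t, 0 < m w := by
    intro w
    obtain ⟨i, -⟩ := hBdiff w 0 1 (by omega) (by omega) (by omega)
    exact i.pos
  -- embeddings for column bookkeeping
  have hcard1 : Fintype.card (Fin (N - s - ∑ w, u w) ⊕ (Σ w : Fin t, Fin (u w)))
      = Fintype.card (Fin (N - s)) := by
    simp only [Fintype.card_sum, Fintype.card_sigma, Fintype.card_fin]
    omega
  set e1 := Fintype.equivOfCardEq hcard1 with he1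
  have hcard2 : Fintype.card (Σ w : Fin t, Fin (n w)) ≤ Fintype.card (Fin s) := by
    simp only [Fintype.card_sigma, Fintype.card_fin]
    exact hns
  obtain ⟨e2⟩ := Function.Embedding.nonempty_of_card_le hcard2
  set fS : Fin (N - s) → Fin N := fun p => ((S.orderIsoOfFin hScard) p : Fin N) with hfS
  have hfSmem : ∀ p, fS p ∈ S := fun p => ((S.orderIsoOfFin hScard) p).2
  have hfSinj : Function.Injective fS :=
    fun p q h => (S.orderIsoOfFin hScard).injective (Subtype.ext h)
  have hSccard : Sᶜ.card = s := by
    rw [Finset.card_compl, hScard, Fintype.card_fin]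
    omega
  set gc : Fin s → Fin N := fun p => ((Sᶜ.orderIsoOfFin hSccard) p : Fin N) with hgc
  have hgcmem : ∀ p, gc p ∉ S := fun p => by
    have := ((Sᶜ.orderIsoOfFin hSccard) p).2
    simp only [Finset.mem_compl] at this
    exact this
  have hgcinj : Function.Injective gc :=
    fun p q h => (Sᶜ.orderIsoOfFin hSccard).injective (Subtype.ext h)
  -- the column map and encoding functions
  have hebound : ∀ (p : Σ w : Fin t, Σ i : Fin (m w), Fin (u w + v w i)),
      ¬ ((p.2.2 : ℕ) < u p.1) → (p.2.2 : ℕ) - u p.1 < n p.1 := by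
    intro p hp
    have h1 := p.2.2.isLt
    have h2 := hv p.1 p.2.1
    omega
  set colr : (Σ w : Fin t, Σ i : Fin (m w), Fin (u w + v w i)) → Fin N := fun p =>
    if h : (p.2.2 : ℕ) < u p.1 then fS (e1 (Sum.inr ⟨p.1, ⟨(p.2.2 : ℕ), h⟩⟩))
    else gc (e2 ⟨p.1, ⟨(p.2.2 : ℕ) - u p.1, hebound p h⟩⟩) with hcolr
  set col : (Fin (N - s - ∑ w, u w) ⊕ (Σ w : Fin t, Σ i : Fin (m w), Fin (u w + v w i))) → Fin N :=
    Sum.elim (fun c => fS (e1 (Sum.inl c))) colr with hcol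
  set enc : (Fin (N - s - ∑ w, u w) ⊕ (Σ w : Fin t, Σ i : Fin (m w), Fin (u w + v w i))) → ℕ → ℕ :=
    Sum.elim (fun _ a => a) (fun p a => B p.1 a p.2.1) with henc
  -- injectivity/separation facts about columns
  have hcolr_eq : ∀ p q, colr p = colr q → p.1 = q.1 ∧ (p.2.2 : ℕ) = (q.2.2 : ℕ) := by
    intro p q h
    simp only [hcolr] at h
    by_cases hp : (p.2.2 : ℕ) < u p.1 <;> by_cases hq : (q.2.2 : ℕ) < u q.1
    · rw [dif_pos hp, dif_pos hq] at h
      have h3 : (⟨p.1, ⟨(p.2.2 : ℕ), hp⟩⟩ : Σ w : Fin t, Fin (u w)) = ⟨q.1, ⟨(q.2.2 : ℕ), hq⟩⟩ :=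
        Sum.inr.inj (e1.injective (hfSinj h))
      exact ⟨congrArg (fun z : Σ w : Fin t, Fin (u w) => z.1) h3, congrArg (fun z : Σ w : Fin t, Fin (u w) => (z.2 : ℕ)) h3⟩
    · rw [dif_pos hp, dif_neg hq] at h
      exact absurd (h ▸ hfSmem _) (hgcmem _)
    · rw [dif_neg hp, dif_pos hq] at h
      exact absurd (h.symm ▸ hfSmem _) (hgcmem _)
    · rw [dif_neg hp, dif_neg hq] at h
      have h2 := e2.injective (hgcinj h)
      have hw : p.1 = q.1 := congrArg (fun z : Σ w : Fin t, Fin (n w) => z.1) h2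
      have hval : (p.2.2 : ℕ) - u p.1 = (q.2.2 : ℕ) - u q.1 :=
        congrArg (fun z : Σ w : Fin t, Fin (n w) => (z.2 : ℕ)) h2
      have hu' : u p.1 = u q.1 := by rw [hw]
      exact ⟨hw, by omega⟩
  have hcolmix : ∀ c p, col (Sum.inl c) ≠ col (Sum.inr p) := by
    intro c p h
    simp only [hcol, Sum.elim_inl, Sum.elim_inr, hcolr] at h
    by_cases hp : (p.2.2 : ℕ) < u p.1
    · rw [dif_pos hp] at h
      have := e1.injective (hfSinj h)
      simp at this
    · rw [dif_neg hp] at h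
      exact (hgcmem _) (h ▸ hfSmem _)
  have hcolinl : ∀ c c', col (Sum.inl c) = col (Sum.inl c') → c = c' := by
    intro c c' h
    simp only [hcol, Sum.elim_inl] at h
    exact Sum.inl.inj (e1.injective (hfSinj h))
  have sigma_i_inj : ∀ (w : Fin t) (i i' : Fin (m w)) (e : Fin (u w + v w i))
      (e' : Fin (u w + v w i')),
      (⟨w, i, e⟩ : Σ w : Fin t, Σ i : Fin (m w), Fin (u w + v w i)) = ⟨w, i', e'⟩ → i = i' := by
    intro w i i' e e' h
    obtain ⟨-, h3⟩ := Sigma.mk.inj_iff.mp h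
    exact (Sigma.mk.inj_iff.mp (eq_of_heq h3)).1
  -- the key counting property for fibers of `col`
  have h2 : ∀ (j : Fin N)
      (P : Finset (Fin (N - s - ∑ w, u w) ⊕ (Σ w : Fin t, Σ i : Fin (m w), Fin (u w + v w i)))),
      (∀ c ∈ P, col c = j) → P.card ≤ k →
      ∀ x : (Fin (N - s - ∑ w, u w) ⊕ (Σ w : Fin t, Σ i : Fin (m w), Fin (u w + v w i))) → ℕ,
      (∀ c ∈ P, x c < Sum.elim (fun _ => d) (fun p => Blv p.1 p.2.1) c) →
      ((Finset.range d).filter fun a => ∀ c ∈ P, enc c a = x c).card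
        * ∏ c ∈ P, Sum.elim (fun _ => d) (fun p => Blv p.1 p.2.1) c = d := by
    intro j P hPcol hPk x hx
    by_cases hinl : ∃ c0, Sum.inl c0 ∈ P
    · obtain ⟨c0, hc0⟩ := hinl
      have hPsing : P = {Sum.inl c0} := by
        apply Finset.Subset.antisymm
        · intro c hc
          rw [Finset.mem_singleton]
          cases c with
          | inl c' =>
            have hcc : col (Sum.inl c') = col (Sum.inl c0) := by
              rw [hPcol _ hc, hPcol _ hc0]
            rw [hcolinl _ _ hcc]
          | inr p =>
            exact absurd ((hPcol _ hc0).trans (hPcol _ hc).symm) (hcolmix c0 p)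
        · intro c hc
          rw [Finset.mem_singleton] at hc
          rw [hc]; exact hc0
      subst hPsing
      have hxd : x (Sum.inl c0) < d := by simpa using hx _ (Finset.mem_singleton_self _)
      have hfeq : (Finset.range d).filter
          (fun a => ∀ c ∈ ({Sum.inl c0} : Finset _), enc c a = x c) = {x (Sum.inl c0)} := by
        ext a
        simp only [Finset.mem_filter, Finset.mem_range, Finset.mem_singleton, forall_eq, henc,
          Sum.elim_inl]
        constructor
        · exact fun h => h.2
        · rintro rfl; exact ⟨hxd, rfl⟩
      rw [hfeq]
      simp
    · rcases P.eq_empty_or_nonempty with rfl | ⟨c0, hc0⟩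
      · simp
      obtain ⟨w0', i0', e0', hc0eq⟩ : ∃ w i e, c0 = Sum.inr ⟨w, i, e⟩ := by
        cases c0 with
        | inl c => exact absurd ⟨c, hc0⟩ hinl
        | inr p => exact ⟨p.1, p.2.1, p.2.2, rfl⟩
      have hP : ∀ c ∈ P, ∃ (i : Fin (m w0')) (e : Fin (u w0' + v w0' i)),
          c = Sum.inr ⟨w0', i, e⟩ := by
        intro c hc
        cases c with
        | inl c' => exact absurd ⟨c', hc⟩ hinl
        | inr p =>
          obtain ⟨w, i, e⟩ := p
          have h1 := (hPcol _ hc).trans (hPcol _ hc0).symm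
          rw [hc0eq] at h1
          simp only [hcol, Sum.elim_inr] at h1
          have hw : w = w0' := (hcolr_eq ⟨w, i, e⟩ ⟨w0', i0', e0'⟩ h1).1
          subst hw
          exact ⟨i, e, rfl⟩
      have huniq : ∀ (i : Fin (m w0')) (e e' : Fin (u w0' + v w0' i)),
          Sum.inr ⟨w0', i, e⟩ ∈ P → Sum.inr ⟨w0', i, e'⟩ ∈ P → e = e' := by
        intro i e e' h h'
        have h1 := (hPcol _ h).trans (hPcol _ h').symm
        simp only [hcol, Sum.elim_inr] at h1
        exact Fin.ext (hcolr_eq ⟨w0', i, e⟩ ⟨w0', i, e'⟩ h1).2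
      set I : Finset (Fin (m w0')) := Finset.univ.filter
        (fun i => ∃ e : Fin (u w0' + v w0' i), Sum.inr ⟨w0', i, e⟩ ∈ P) with hI
      set xB : Fin (m w0') → ℕ := fun i =>
        if h : ∃ e : Fin (u w0' + v w0' i), Sum.inr ⟨w0', i, e⟩ ∈ P
        then x (Sum.inr ⟨w0', i, h.choose⟩) else 0 with hxB
      have hxBval : ∀ (i : Fin (m w0')) (e : Fin (u w0' + v w0' i)),
          Sum.inr ⟨w0', i, e⟩ ∈ P → xB i = x (Sum.inr ⟨w0', i, e⟩) := by
        intro i e he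
        have hex : ∃ e : Fin (u w0' + v w0' i), Sum.inr ⟨w0', i, e⟩ ∈ P := ⟨e, he⟩
        simp only [hxB, dif_pos hex]
        rw [huniq i hex.choose e hex.choose_spec he]
      have hmemI : ∀ (i : Fin (m w0')) (e : Fin (u w0' + v w0' i)),
          Sum.inr ⟨w0', i, e⟩ ∈ P → i ∈ I := by
        intro i e he
        rw [hI, Finset.mem_filter]
        exact ⟨Finset.mem_univ _, ⟨e, he⟩⟩
      have hecard : ∀ i ∈ I, ∃ e : Fin (u w0' + v w0' i), Sum.inr ⟨w0', i, e⟩ ∈ P :=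
        fun i hi => (Finset.mem_filter.mp hi).2
      have hIcard : I.card = P.card := by
        apply Finset.card_bij (fun i hi => (Sum.inr ⟨w0', i, (hecard i hi).choose⟩ :
          Fin (N - s - ∑ w, u w) ⊕ (Σ w : Fin t, Σ i : Fin (m w), Fin (u w + v w i))))
        · exact fun i hi => (hecard i hi).choose_spec
        · intro i1 h1 i2 h2 heq
          exact sigma_i_inj w0' i1 i2 _ _ (Sum.inr.inj heq)
        · intro c hc
          obtain ⟨i, e, rfl⟩ := hP c hc
          refine ⟨i, hmemI i e hc, ?_⟩
          congr 1
          have := huniq i (hecard i (hmemI i e hc)).choose e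
            (hecard i (hmemI i e hc)).choose_spec hc
          rw [this]
      have hIprod : ∏ c ∈ P, Sum.elim (fun _ => d) (fun p => Blv p.1 p.2.1) c
          = ∏ i ∈ I, Blv w0' i := by
        symm
        apply Finset.prod_bij (fun i hi => (Sum.inr ⟨w0', i, (hecard i hi).choose⟩ :
          Fin (N - s - ∑ w, u w) ⊕ (Σ w : Fin t, Σ i : Fin (m w), Fin (u w + v w i))))
        · exact fun i hi => (hecard i hi).choose_spec
        · intro i1 h1 i2 h2 heq
          exact sigma_i_inj w0' i1 i2 _ _ (Sum.inr.inj heq)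
        · intro c hc
          obtain ⟨i, e, rfl⟩ := hP c hc
          refine ⟨i, hmemI i e hc, ?_⟩
          congr 1
          have := huniq i (hecard i (hmemI i e hc)).choose e
            (hecard i (hmemI i e hc)).choose_spec hc
          rw [this]
        · intro i hi
          simp
      have hxBlt : ∀ i ∈ I, xB i < Blv w0' i := by
        intro i hi
        obtain ⟨e, he⟩ := hecard i hi
        rw [hxBval i e he]
        simpa using hx _ he
      have hconstr : ∀ a : ℕ, (∀ c ∈ P, enc c a = x c) ↔ (∀ i ∈ I, B w0' a i = xB i) := by
        intro a
        constructor
        · intro h i hi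
          obtain ⟨e, he⟩ := hecard i hi
          rw [hxBval i e he]
          have := h _ he
          simpa [henc] using this
        · intro h c hc
          obtain ⟨i, e, rfl⟩ := hP c hc
          rw [← hxBval i e hc]
          have := h i (hmemI i e hc)
          simpa [henc] using this
      have hBmoa := (hB w0').2 I (hIcard ▸ hPk) xB hxBlt
      rw [Fintype.card_fin] at hBmoa
      have hcards : ((Finset.range d).filter fun a => ∀ c ∈ P, enc c a = x c).card
          = (Finset.univ.filter fun a : Fin d =>
              ∀ i ∈ I, (fun a : Fin d => B w0' a.val) a i = xB i).card := by
        apply Finset.card_bij (fun (a : ℕ) (ha : a ∈ (Finset.range d).filter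
          fun a => ∀ c ∈ P, enc c a = x c) =>
          (⟨a, Finset.mem_range.mp (Finset.mem_filter.mp ha).1⟩ : Fin d))
        · intro a ha
          simp only [Finset.mem_filter, Finset.mem_univ, true_and]
          exact (hconstr a).mp (Finset.mem_filter.mp ha).2
        · intro a1 h1 a2 h2 heq
          exact congrArg Fin.val heq
        · intro b hb
          refine ⟨b.val, ?_, rfl⟩
          simp only [Finset.mem_filter, Finset.mem_range]
          refine ⟨b.isLt, (hconstr b.val).mpr ?_⟩
          simpa using (Finset.mem_filter.mp hb).2
      rw [hcards, hIprod]
      convert hBmoa using 3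
      congr!
  -- the MOA part via derived_MOA
  have h1enc : ∀ c a, a < d → enc c a < Sum.elim (fun _ => d) (fun p => Blv p.1 p.2.1) c := by
    intro c a ha
    cases c with
    | inl c => simpa [henc] using ha
    | inr p =>
      have := (hB p.1).1 ⟨a, ha⟩ p.2.1
      simpa [henc] using this
  have hMOA : IsMOA (fun i c => enc c (A i (col c)))
      (Sum.elim (fun _ => d) fun p => Blv p.1 p.2.1) k := by
    refine derived_MOA A hA hd col enc _ h1enc ?_
    intro j P hPcol hPk x hx
    have := h2 j P hPcol hPk x hx
    convert this using 3
    congr!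
  refine ⟨fun i c => enc c (A i (col c)), hMOA, ?_⟩
  intro i i' hii
  -- the row-distance bound
  have hstep : k + 1 ≤ (Finset.univ.filter fun j : {x // x ∈ S} => A i j.1 ≠ A i' j.1).card := by
    have h2' : minDist (fun i (j : S) => A i j.1) ≤ hamDist (fun i (j : S) => A i j.1) i i' :=
      Nat.sInf_le ⟨i, i', hii, rfl⟩
    have h3 : hamDist (fun i (j : S) => A i j.1) i i'
        = (Finset.univ.filter fun j : {x // x ∈ S} => A i j.1 ≠ A i' j.1).card := rfl
    omega
  set f : {j // j ∈ S} →
      (Fin (N - s - ∑ w, u w) ⊕ (Σ w : Fin t, Σ i : Fin (m w), Fin (u w + v w i))) :=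
    fun j => Sum.elim (fun c => (Sum.inl c :
        Fin (N - s - ∑ w, u w) ⊕ (Σ w : Fin t, Σ i : Fin (m w), Fin (u w + v w i))))
      (fun q : Σ w : Fin t, Fin (u w) => Sum.inr ⟨q.1,
        (if h : ∃ i₀ : Fin (m q.1), B q.1 (A i j.1) i₀ ≠ B q.1 (A i' j.1) i₀
          then h.choose else ⟨0, hm1 q.1⟩),
        ⟨q.2.1, lt_of_lt_of_le q.2.2 (Nat.le_add_right _ _)⟩⟩)
      (e1.symm ((S.orderIsoOfFin hScard).symm j)) with hf
  have hcolf : ∀ j : {j // j ∈ S}, col (f j) = j.1 := by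
    intro j
    simp only [hf]
    rcases hz : e1.symm ((S.orderIsoOfFin hScard).symm j) with c | ⟨w, e⟩
    · simp only [Sum.elim_inl, hcol]
      rw [← hz, Equiv.apply_symm_apply]
      simp only [hfS]
      rw [OrderIso.apply_symm_apply]
    · simp only [Sum.elim_inr, hcol, hcolr]
      split
      · rename_i h'
        have he : (⟨(e : ℕ), h'⟩ : Fin (u w)) = e := Fin.ext rfl
        rw [he, ← hz, Equiv.apply_symm_apply]
        simp only [hfS]
        rw [OrderIso.apply_symm_apply]
      · rename_i h'
        exact absurd e.isLt h'
  have hfdiff : ∀ j : {j // j ∈ S}, A i j.1 ≠ A i' j.1 →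
      enc (f j) (A i (col (f j))) ≠ enc (f j) (A i' (col (f j))) := by
    intro j hj
    rw [hcolf j]
    simp only [hf]
    rcases hz : e1.symm ((S.orderIsoOfFin hScard).symm j) with c | ⟨w, e⟩
    · simpa [henc] using hj
    · have hex : ∃ i₀ : Fin (m w), B w (A i j.1) i₀ ≠ B w (A i' j.1) i₀ :=
        hBdiff w _ _ (hA.1 i j.1) (hA.1 i' j.1) hj
      simp only [Sum.elim_inr, henc, dif_pos hex]
      exact hex.choose_spec
  have hfinj : Function.Injective f := by
    intro j j' heq
    simp only [hf] at heq
    have hjj : e1.symm ((S.orderIsoOfFin hScard).symm j)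
        = e1.symm ((S.orderIsoOfFin hScard).symm j') := by
      rcases hz : e1.symm ((S.orderIsoOfFin hScard).symm j) with c | ⟨w, e⟩ <;>
        rcases hz' : e1.symm ((S.orderIsoOfFin hScard).symm j') with c' | ⟨w', e'⟩ <;>
        rw [hz, hz'] at heq <;> simp only [Sum.elim_inl, Sum.elim_inr] at heq
      · rw [Sum.inl.inj heq]
      · exact absurd heq (by simp)
      · exact absurd heq (by simp)
      · have h3 := Sum.inr.inj heq
        have hw : w = w' := congrArg (fun z : Σ w : Fin t, Σ i : Fin (m w), Fin (u w + v w i)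
          => z.1) h3
        have hval : (e : ℕ) = (e' : ℕ) := congrArg
          (fun z : Σ w : Fin t, Σ i : Fin (m w), Fin (u w + v w i) => (z.2.2 : ℕ)) h3
        subst hw
        rw [Fin.ext hval]
    have := e1.symm.injective hjj
    exact (S.orderIsoOfFin hScard).symm.injective this
  show k + 1 ≤ hamDist (fun i c => enc c (A i (col c))) i i'
  have hham : hamDist (fun i c => enc c (A i (col c))) i i'
      = (Finset.univ.filter fun c => enc c (A i (col c)) ≠ enc c (A i' (col c))).card := rfl
  rw [hham]
  refine le_trans hstep (Finset.card_le_card_of_injOn f ?_ ?_)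
  · intro j hj
    simp only [Finset.mem_coe, Finset.mem_filter, Finset.mem_univ, true_and] at hj ⊢
    exact hfdiff j hj
  · exact fun a _ b _ h => hfinj h
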